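/- arXiv:1305.0450 — 3 statements merged into one kernel-verified Lean document; each statement's English description precedes it below -/
import Mathlib

section
/- In the endomorphism algebra of V ⊗ K_λ ⊗ V* over gl(m|n), the Casimir operators satisfy (x_1 + x̄_1) e_1 = 0 and e_1 (x_1 + x̄_1) = 0, where x_1, x̄_1, e_1 are the operators given by the Casimir element Ω acting on tensor positions (V, K_λ), (K_λ, V*), (V, V*) respectively. -/
set_option maxHeartbeats 2000000


open TensorProduct

section CasimirAux

lemma casimir_std_mul {N : Type*} [Fintype N] [DecidableEq N] (a b c d : N) :
    Matrix.single a b (1:ℂ) * Matrix.single c d 1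
      = if b = c then Matrix.single a d 1 else 0 := by
  by_cases h : b = c
  · subst h; simp [Matrix.single_mul_single_same]
  · simp [h, Matrix.single_mul_single_of_ne (c := (1:ℂ)) (h := h)]

lemma casimir_std_diag {N : Type*} [Fintype N] [DecidableEq N] (f : N → ℂ) (a b : N) :
    Matrix.single a b (1:ℂ) * (Matrix.diagonal f) = f b • Matrix.single a b 1 := by
  ext i j
  rw [Matrix.mul_diagonal, Matrix.smul_apply]
  by_cases h : j = b
  · subst h; rw [mul_comm, smul_eq_mul]
  · simp [Matrix.single_apply_of_ne (c := (1:ℂ)) (i := a) (j := b) (i' := i) (j' := j) (by tauto)]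

lemma casimir_map3_mul {R : Type*} [CommRing R] {A B C : Type*} [AddCommGroup A] [AddCommGroup B]
    [AddCommGroup C] [Module R A] [Module R B] [Module R C]
    (f f' : Module.End R A) (g g' : Module.End R B) (h h' : Module.End R C) :
    (TensorProduct.map f (TensorProduct.map g h)) * (TensorProduct.map f' (TensorProduct.map g' h'))
      = TensorProduct.map (f * f') (TensorProduct.map (g * g') (h * h')) := by
  simp only [Module.End.mul_eq_comp, TensorProduct.map_comp]

lemma casimir_toLin_std_mul {N : Type*} [Fintype N] [DecidableEq N] (a b c d : N) :
    (Matrix.toLin' (Matrix.single a b (1:ℂ)) : Module.End ℂ (N → ℂ))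
        * Matrix.toLin' (Matrix.single c d 1)
      = if b = c then Matrix.toLin' (Matrix.single a d 1) else 0 := by
  rw [Module.End.mul_eq_comp, ← Matrix.toLin'_mul, casimir_std_mul]
  split_ifs <;> simp

lemma casimir_toLin_std_diag {N : Type*} [Fintype N] [DecidableEq N] (f : N → ℂ) (a b : N) :
    (Matrix.toLin' (Matrix.single a b (1:ℂ)) : Module.End ℂ (N → ℂ))
        * Matrix.toLin' (Matrix.diagonal f)
      = f b • Matrix.toLin' (Matrix.single a b 1) := by
  rw [Module.End.mul_eq_comp, ← Matrix.toLin'_mul, casimir_std_diag, map_smul]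

end CasimirAux

/-- On `V ⊗ K_λ ⊗ V*` over `gl(m|n)` (with `K_λ` the Kac module with highest
weight `λ = (p,…,p|−q,…,−q)`, rendered as a ℤ₂-graded module `K` with parity
operator `PK`, a `gl(m|n)`-action `EK` and an even highest weight vector `vlam`),
the Casimir operators satisfy `(x₁ + x̄₁) e₁ = 0` and `e₁ (x₁ + x̄₁) = 0`, where
`x₁ = π_{10}(Ω)`, `x̄₁ = π_{01̄}(Ω)`, `e₁ = π_{11̄}(Ω)` for
`Ω = ∑_{a,b} (−1)^{[b]} E_{ab} ⊗ E_{ba}` with the super sign rules. -/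
theorem casimir_x_xbar_e (m n : ℕ) (pp qq : ℂ)
    (par : Fin (m + n) → ℕ) (hpar : ∀ i, par i = if (i : ℕ) < m then 0 else 1)
    (K : Type*) [AddCommGroup K] [Module ℂ K]
    (EK : Fin (m + n) → Fin (m + n) → Module.End ℂ K)
    (PK : Module.End ℂ K) (hPK : PK * PK = 1)
    (hPKE : ∀ a b, PK * EK a b = ((-1 : ℂ) ^ (par a + par b)) • (EK a b * PK))
    (hbr : ∀ i j k l, EK i j * EK k l
        - ((-1 : ℂ) ^ ((par i + par j) * (par k + par l))) • (EK k l * EK i j)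
      = (if j = k then EK i l else 0)
        - ((-1 : ℂ) ^ ((par i + par j) * (par k + par l))) • (if l = i then EK k j else 0))
    (vlam : K) (hPv : PK vlam = vlam)
    (hw1 : ∀ i : Fin (m + n), (i : ℕ) < m → EK i i vlam = pp • vlam)
    (hw2 : ∀ i : Fin (m + n), m ≤ (i : ℕ) → EK i i vlam = (-qq) • vlam)
    (hw0 : ∀ i j : Fin (m + n), i ≠ j →
      (((i : ℕ) < m ∧ (j : ℕ) < m) ∨ (m ≤ (i : ℕ) ∧ m ≤ (j : ℕ))) → EK i j vlam = 0)
    (EV : Fin (m + n) → Fin (m + n) → Module.End ℂ (Fin (m + n) → ℂ))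
    (hEV : ∀ a b, EV a b = Matrix.toLin' (Matrix.single a b 1))
    (EVd : Fin (m + n) → Fin (m + n) → Module.End ℂ (Fin (m + n) → ℂ))
    (hEVd : ∀ a b, EVd a b =
      Matrix.toLin' ((-(-1 : ℂ) ^ (par a * (par a + par b))) • Matrix.single b a 1))
    (PV : Module.End ℂ (Fin (m + n) → ℂ))
    (hPV : PV = Matrix.toLin' (Matrix.diagonal fun i => (-1 : ℂ) ^ (par i)))
    (x1 xb1 e1 : Module.End ℂ ((Fin (m + n) → ℂ) ⊗[ℂ] (K ⊗[ℂ] (Fin (m + n) → ℂ))))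
    (hx1 : x1 = ∑ a, ∑ b, ((-1 : ℂ) ^ (par b)) •
      TensorProduct.map (EV a b * PV ^ (par a + par b))
        (TensorProduct.map (EK b a) (LinearMap.id : (Fin (m + n) → ℂ) →ₗ[ℂ] (Fin (m + n) → ℂ))))
    (hxb1 : xb1 = ∑ a, ∑ b, ((-1 : ℂ) ^ (par b)) •
      TensorProduct.map (LinearMap.id : (Fin (m + n) → ℂ) →ₗ[ℂ] (Fin (m + n) → ℂ))
        (TensorProduct.map (EK a b * PK ^ (par a + par b)) (EVd b a)))
    (he1 : e1 = ∑ a, ∑ b, ((-1 : ℂ) ^ (par b)) •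
      TensorProduct.map (EV a b * PV ^ (par a + par b))
        (TensorProduct.map (PK ^ (par a + par b)) (EVd b a))) :
    (x1 + xb1) * e1 = 0 ∧ e1 * (x1 + xb1) = 0 := by
  classical
  have hpar01 : ∀ i, par i = 0 ∨ par i = 1 := by
    intro i; rw [hpar i]; split <;> simp
  -- abbreviation for the elementary operators on V and V*
  have hEoPV : ∀ (s : ℕ) (a b : Fin (m + n)),
      (Matrix.toLin' (Matrix.single a b (1:ℂ)) : Module.End ℂ (Fin (m+n) → ℂ)) * PV ^ s
        = (((-1 : ℂ) ^ par b) ^ s) • Matrix.toLin' (Matrix.single a b 1) := by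
    intro s a b
    induction s with
    | zero => simp
    | succ t ih =>
        rw [pow_succ, ← mul_assoc, ih, smul_mul_assoc, hPV, casimir_toLin_std_diag,
          smul_smul, ← pow_succ]
  have hPK2 : PK ^ 2 = 1 := by rw [pow_two, hPK]
  have hPKpow : ∀ s t : ℕ, PK ^ (s + 2 * t) = PK ^ s := by
    intro s t; rw [pow_add, pow_mul, hPK2, one_pow, mul_one]
  have hPKEpow : ∀ (s : ℕ) (a b : Fin (m + n)),
      PK ^ s * EK a b = (((-1 : ℂ) ^ (par a + par b)) ^ s) • (EK a b * PK ^ s) := by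
    intro s a b
    induction s with
    | zero => simp
    | succ t ih =>
        rw [pow_succ, mul_assoc, hPKE, mul_smul_comm, ← mul_assoc, ih, smul_mul_assoc,
          smul_smul, ← mul_assoc, ← pow_succ']
  -- canonical forms of the three operators
  have hx1' : x1 = ∑ a, ∑ b,
      ((-1 : ℂ) ^ par b * ((-1 : ℂ) ^ par b) ^ (par a + par b)) •
        TensorProduct.map (Matrix.toLin' (Matrix.single a b 1))
          (TensorProduct.map (EK b a)
            (LinearMap.id : (Fin (m + n) → ℂ) →ₗ[ℂ] (Fin (m + n) → ℂ))) := by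
    rw [hx1]
    refine Finset.sum_congr rfl fun a _ => Finset.sum_congr rfl fun b _ => ?_
    rw [hEV a b, hEoPV, TensorProduct.map_smul_left, smul_smul]
  have hxb1' : xb1 = ∑ a, ∑ b,
      ((-1 : ℂ) ^ par b * (-(-1 : ℂ) ^ (par b * (par b + par a)))) •
        TensorProduct.map (LinearMap.id : (Fin (m + n) → ℂ) →ₗ[ℂ] (Fin (m + n) → ℂ))
          (TensorProduct.map (EK a b * PK ^ (par a + par b))
            (Matrix.toLin' (Matrix.single a b 1))) := by
    rw [hxb1]
    refine Finset.sum_congr rfl fun a _ => Finset.sum_congr rfl fun b _ => ?_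
    rw [hEVd b a, map_smul, TensorProduct.map_smul_right, TensorProduct.map_smul_right,
      smul_smul]
  have he1' : e1 = ∑ a, ∑ b,
      ((-1 : ℂ) ^ par b * ((-1 : ℂ) ^ par b) ^ (par a + par b) *
        (-(-1 : ℂ) ^ (par b * (par b + par a)))) •
        TensorProduct.map (Matrix.toLin' (Matrix.single a b 1))
          (TensorProduct.map (PK ^ (par a + par b))
            (Matrix.toLin' (Matrix.single a b 1))) := by
    rw [he1]
    refine Finset.sum_congr rfl fun a _ => Finset.sum_congr rfl fun b _ => ?_
    rw [hEV a b, hEoPV, hEVd b a, map_smul, TensorProduct.map_smul_right,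
      TensorProduct.map_smul_right, TensorProduct.map_smul_left, smul_smul, smul_smul]
    congr 1
    ring

  -- Part 1 : (x1 + xb1) * e1 = 0
  have h1 : x1 * e1 = ∑ a, ∑ b, ∑ d,
      (((-1 : ℂ) ^ par b * ((-1 : ℂ) ^ par b) ^ (par a + par b)) *
        ((-1 : ℂ) ^ par d * ((-1 : ℂ) ^ par d) ^ (par b + par d) *
          (-(-1 : ℂ) ^ (par d * (par d + par b))))) •
        TensorProduct.map (Matrix.toLin' (Matrix.single a d 1))
          (TensorProduct.map (EK b a * PK ^ (par b + par d))
            (Matrix.toLin' (Matrix.single b d 1))) := by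
    rw [hx1', he1', Finset.sum_mul]
    refine Finset.sum_congr rfl fun a _ => ?_
    rw [Finset.sum_mul]
    refine Finset.sum_congr rfl fun b _ => ?_
    simp only [Finset.mul_sum]
    refine Eq.trans (Finset.sum_eq_single b ?_ ?_) (Finset.sum_congr rfl fun d _ => ?_)
    · intro c _ hc
      refine Finset.sum_eq_zero fun d _ => ?_
      rw [smul_mul_smul_comm, casimir_map3_mul, casimir_toLin_std_mul,
        if_neg (fun h => hc h.symm), TensorProduct.map_zero_left, smul_zero]
    · intro hb; exact absurd (Finset.mem_univ b) hb
    · rw [smul_mul_smul_comm, casimir_map3_mul, casimir_toLin_std_mul, if_pos rfl,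
        ← Module.End.one_eq_id, one_mul]
  have h2 : xb1 * e1 = ∑ a, ∑ b, ∑ d,
      (((-1 : ℂ) ^ par b * (-(-1 : ℂ) ^ (par b * (par b + par a)))) *
        ((-1 : ℂ) ^ par d * ((-1 : ℂ) ^ par d) ^ (par b + par d) *
          (-(-1 : ℂ) ^ (par d * (par d + par b))))) •
        TensorProduct.map (Matrix.toLin' (Matrix.single b d 1))
          (TensorProduct.map (EK a b * PK ^ (par a + par d))
            (Matrix.toLin' (Matrix.single a d 1))) := by
    rw [hxb1', he1', Finset.sum_mul]
    refine Finset.sum_congr rfl fun a _ => ?_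
    rw [Finset.sum_mul]
    refine Finset.sum_congr rfl fun b _ => ?_
    simp only [Finset.mul_sum]
    refine Eq.trans (Finset.sum_eq_single b ?_ ?_) (Finset.sum_congr rfl fun d _ => ?_)
    · intro c _ hc
      refine Finset.sum_eq_zero fun d _ => ?_
      rw [smul_mul_smul_comm, casimir_map3_mul, casimir_toLin_std_mul,
        if_neg (fun h => hc h.symm), TensorProduct.map_zero_right,
        TensorProduct.map_zero_right, smul_zero]
    · intro hb; exact absurd (Finset.mem_univ b) hb
    · rw [smul_mul_smul_comm, casimir_map3_mul, casimir_toLin_std_mul, if_pos rfl,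
        ← Module.End.one_eq_id, one_mul,
        mul_assoc (EK a b) (PK ^ (par a + par b)) (PK ^ (par b + par d)),
        ← pow_add PK,
        show par a + par b + (par b + par d) = (par a + par d) + 2 * par b by ring, hPKpow]
  have h2' : xb1 * e1 = ∑ a, ∑ b, ∑ d,
      (((-1 : ℂ) ^ par a * (-(-1 : ℂ) ^ (par a * (par a + par b)))) *
        ((-1 : ℂ) ^ par d * ((-1 : ℂ) ^ par d) ^ (par a + par d) *
          (-(-1 : ℂ) ^ (par d * (par d + par a))))) •
        TensorProduct.map (Matrix.toLin' (Matrix.single a d 1))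
          (TensorProduct.map (EK b a * PK ^ (par b + par d))
            (Matrix.toLin' (Matrix.single b d 1))) := by
    rw [h2]; exact Finset.sum_comm
  have part1 : (x1 + xb1) * e1 = 0 := by
    rw [add_mul, h1, h2', ← Finset.sum_add_distrib]
    refine Finset.sum_eq_zero fun a _ => ?_
    rw [← Finset.sum_add_distrib]
    refine Finset.sum_eq_zero fun b _ => ?_
    rw [← Finset.sum_add_distrib]
    refine Finset.sum_eq_zero fun d _ => ?_
    rw [← add_smul]
    apply smul_eq_zero_of_left
    rcases hpar01 a with ha | ha <;> rcases hpar01 b with hb | hb <;>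
      rcases hpar01 d with hd | hd <;> rw [ha, hb, hd] <;> norm_num
  -- Part 2 : e1 * (x1 + xb1) = 0
  have h3 : e1 * x1 = ∑ a, ∑ b, ∑ d,
      ((((-1 : ℂ) ^ par b * ((-1 : ℂ) ^ par b) ^ (par a + par b) *
          (-(-1 : ℂ) ^ (par b * (par b + par a)))) *
        ((-1 : ℂ) ^ par d * ((-1 : ℂ) ^ par d) ^ (par b + par d))) *
        ((-1 : ℂ) ^ (par d + par b)) ^ (par a + par b)) •
        TensorProduct.map (Matrix.toLin' (Matrix.single a d 1))
          (TensorProduct.map (EK d b * PK ^ (par a + par b))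
            (Matrix.toLin' (Matrix.single a b 1))) := by
    rw [he1', hx1', Finset.sum_mul]
    refine Finset.sum_congr rfl fun a _ => ?_
    rw [Finset.sum_mul]
    refine Finset.sum_congr rfl fun b _ => ?_
    simp only [Finset.mul_sum]
    refine Eq.trans (Finset.sum_eq_single b ?_ ?_) (Finset.sum_congr rfl fun d _ => ?_)
    · intro c _ hc
      refine Finset.sum_eq_zero fun d _ => ?_
      rw [smul_mul_smul_comm, casimir_map3_mul, casimir_toLin_std_mul,
        if_neg (fun h => hc h.symm), TensorProduct.map_zero_left, smul_zero]
    · intro hb; exact absurd (Finset.mem_univ b) hb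
    · rw [smul_mul_smul_comm, casimir_map3_mul, casimir_toLin_std_mul, if_pos rfl,
        ← Module.End.one_eq_id, mul_one, hPKEpow,
        TensorProduct.map_smul_left, TensorProduct.map_smul_right, smul_smul]
  have h4 : e1 * xb1 = ∑ a, ∑ b, ∑ d,
      ((((-1 : ℂ) ^ par b * ((-1 : ℂ) ^ par b) ^ (par a + par b) *
          (-(-1 : ℂ) ^ (par b * (par b + par a)))) *
        ((-1 : ℂ) ^ par d * (-(-1 : ℂ) ^ (par d * (par d + par b))))) *
        ((-1 : ℂ) ^ (par b + par d)) ^ (par a + par b)) •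
        TensorProduct.map (Matrix.toLin' (Matrix.single a b 1))
          (TensorProduct.map (EK b d * PK ^ (par a + par d))
            (Matrix.toLin' (Matrix.single a d 1))) := by
    rw [he1', hxb1', Finset.sum_mul]
    refine Finset.sum_congr rfl fun a _ => ?_
    rw [Finset.sum_mul]
    refine Finset.sum_congr rfl fun b _ => ?_
    simp only [Finset.mul_sum]
    refine Eq.trans (Finset.sum_eq_single b ?_ ?_) (Finset.sum_congr rfl fun d _ => ?_)
    · intro c _ hc
      refine Finset.sum_eq_zero fun d _ => ?_
      rw [smul_mul_smul_comm, casimir_map3_mul, casimir_toLin_std_mul,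
        if_neg (fun h => hc h.symm), TensorProduct.map_zero_right,
        TensorProduct.map_zero_right, smul_zero]
    · intro hb; exact absurd (Finset.mem_univ b) hb
    · rw [smul_mul_smul_comm, casimir_map3_mul, casimir_toLin_std_mul, if_pos rfl,
        ← Module.End.one_eq_id, mul_one,
        ← mul_assoc (PK ^ (par a + par b)) (EK b d) (PK ^ (par b + par d)),
        hPKEpow, smul_mul_assoc,
        mul_assoc (EK b d) (PK ^ (par a + par b)) (PK ^ (par b + par d)),
        ← pow_add PK,
        show par a + par b + (par b + par d) = (par a + par d) + 2 * par b by ring, hPKpow,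
        TensorProduct.map_smul_left, TensorProduct.map_smul_right, smul_smul]
  have h4' : e1 * xb1 = ∑ a, ∑ b, ∑ d,
      ((((-1 : ℂ) ^ par d * ((-1 : ℂ) ^ par d) ^ (par a + par d) *
          (-(-1 : ℂ) ^ (par d * (par d + par a)))) *
        ((-1 : ℂ) ^ par b * (-(-1 : ℂ) ^ (par b * (par b + par d))))) *
        ((-1 : ℂ) ^ (par d + par b)) ^ (par a + par d)) •
        TensorProduct.map (Matrix.toLin' (Matrix.single a d 1))
          (TensorProduct.map (EK d b * PK ^ (par a + par b))
            (Matrix.toLin' (Matrix.single a b 1))) := by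
    rw [h4]
    exact Finset.sum_congr rfl fun a _ => Finset.sum_comm
  have part2 : e1 * (x1 + xb1) = 0 := by
    rw [mul_add, h3, h4', ← Finset.sum_add_distrib]
    refine Finset.sum_eq_zero fun a _ => ?_
    rw [← Finset.sum_add_distrib]
    refine Finset.sum_eq_zero fun b _ => ?_
    rw [← Finset.sum_add_distrib]
    refine Finset.sum_eq_zero fun d _ => ?_
    rw [← add_smul]
    apply smul_eq_zero_of_left
    rcases hpar01 a with ha | ha <;> rcases hpar01 b with hb | hb <;>
      rcases hpar01 d with hd | hd <;> rw [ha, hb, hd] <;> norm_num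
  exact ⟨part1, part2⟩
end

section
/- In the walled Brauer algebra B_{r,t}(δ), defining y_i = δ_1 + Σ_{j=1}^{i−1} e_{i,j} − L_i for a fixed δ_1 ∈ R, the elements y_i and y_{i+1} commute: y_i y_{i+1} = y_{i+1} y_i for 1 ≤ i < min(r,t). -/
/-- `s_{1,i} = s_1 s_2 ⋯ s_{i-1}`. -/
def wordUp {A : Type*} [Ring A] (s : ℕ → A) (i : ℕ) : A :=
  ((List.range (i - 1)).map fun k => s (k + 1)).prod

/-- `s_{i,1} = s_{i-1} ⋯ s_2 s_1`. -/
def wordDown {A : Type*} [Ring A] (s : ℕ → A) (i : ℕ) : A :=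
  ((List.range (i - 1)).map fun k => s (i - 1 - k)).prod

/-- The transposition `(j,i)` (for `j < i`) written as the word
`s_{i-1} ⋯ s_{j+1} s_j s_{j+1} ⋯ s_{i-1}`. -/
def transpWord {A : Type*} [Ring A] (s : ℕ → A) (j i : ℕ) : A :=
  ((List.range (i - 1 - j)).map fun k => s (i - 1 - k)).prod * s j *
    ((List.range (i - 1 - j)).map fun k => s (j + 1 + k)).prod

/-- The Jucys–Murphy element `L_i = ∑_{j=1}^{i-1} (j,i)`. -/
def jmElt {A : Type*} [Ring A] (s : ℕ → A) (i : ℕ) : A :=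
  ∑ j ∈ Finset.Ico 1 i, transpWord s j i

/-- `e_{i,j} = s̄_{j,1} s_{i,1} e_1 s_{1,i} s̄_{1,j}`. -/
def eElt {A : Type*} [Ring A] (s sb : ℕ → A) (e : A) (i j : ℕ) : A :=
  wordDown sb j * wordDown s i * e * wordUp s i * wordUp sb j

section aux
variable {A : Type*} [Ring A]

lemma commute_range_prod (x : A) (f : ℕ → A) (n : ℕ) (h : ∀ k, k < n → Commute x (f k)) :
    Commute x (((List.range n).map f).prod) := by
  apply Commute.list_prod_right
  intro y hy
  simp only [List.mem_map, List.mem_range] at hy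
  obtain ⟨k, hk, rfl⟩ := hy
  exact h k hk

lemma wordDown_succ (g : ℕ → A) (m : ℕ) (hm : 1 ≤ m) :
    wordDown g (m + 1) = g m * wordDown g m := by
  unfold wordDown
  have : m + 1 - 1 = (m - 1) + 1 := by omega
  rw [this, List.range_succ_eq_map, List.map_cons, List.prod_cons, List.map_map]
  congr 1
  · congr 1; omega
  · congr 1
    apply List.map_congr_left
    intro a ha
    simp only [Function.comp_apply]
    congr 1; omega

lemma wordUp_succ (g : ℕ → A) (m : ℕ) (hm : 1 ≤ m) :
    wordUp g (m + 1) = wordUp g m * g m := by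
  unfold wordUp
  have : m + 1 - 1 = (m - 1) + 1 := by omega
  rw [this, List.range_succ, List.map_append, List.prod_append]
  congr 2
  simp only [List.map_cons, List.map_nil, List.prod_cons, List.prod_nil, mul_one]
  congr 1; omega

lemma commute_wordDown (x : A) (g : ℕ → A) (m : ℕ)
    (h : ∀ l, 1 ≤ l → l < m → Commute x (g l)) : Commute x (wordDown g m) := by
  apply commute_range_prod
  intro k hk
  exact h (m - 1 - k) (by omega) (by omega)

lemma commute_wordUp (x : A) (g : ℕ → A) (m : ℕ)
    (h : ∀ l, 1 ≤ l → l < m → Commute x (g l)) : Commute x (wordUp g m) := by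
  apply commute_range_prod
  intro k hk
  exact h (k + 1) (by omega) (by omega)

lemma commute_transpWord (x : A) (g : ℕ → A) (j m : ℕ) (hj : 1 ≤ j) (hjm : j < m)
    (h : ∀ l, j ≤ l → l < m → Commute x (g l)) : Commute x (transpWord g j m) := by
  refine Commute.mul_right (Commute.mul_right ?_ (h j le_rfl hjm)) ?_
  · exact commute_range_prod x _ _ (fun k hk => h (m - 1 - k) (by omega) (by omega))
  · exact commute_range_prod x _ _ (fun k hk => h (j + 1 + k) (by omega) (by omega))

end aux

section aux2
variable {A : Type*} [Ring A]

lemma commute_wordDown_of_lt (g : ℕ → A) (N : ℕ)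
    (hcm : ∀ i j, 1 ≤ i → i < N → 1 ≤ j → j < N → (i + 1 < j ∨ j + 1 < i) →
      g i * g j = g j * g i)
    (p m : ℕ) (hp : 1 ≤ p) (hpN : p < N) (hm : m < p) :
    Commute (g p) (wordDown g m) :=
  commute_wordDown _ _ _ (fun l hl hlm =>
    hcm p l hp hpN hl (by omega) (Or.inr (by omega)))

lemma commute_wordUp_of_lt (g : ℕ → A) (N : ℕ)
    (hcm : ∀ i j, 1 ≤ i → i < N → 1 ≤ j → j < N → (i + 1 < j ∨ j + 1 < i) →
      g i * g j = g j * g i)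
    (p m : ℕ) (hp : 1 ≤ p) (hpN : p < N) (hm : m < p) :
    Commute (g p) (wordUp g m) :=
  commute_wordUp _ _ _ (fun l hl hlm =>
    hcm p l hp hpN hl (by omega) (Or.inr (by omega)))

lemma wordDown_pass (g : ℕ → A) (N : ℕ)
    (hcm : ∀ i j, 1 ≤ i → i < N → 1 ≤ j → j < N → (i + 1 < j ∨ j + 1 < i) →
      g i * g j = g j * g i)
    (hbr : ∀ i, 1 ≤ i → i + 1 < N → g i * g (i + 1) * g i = g (i + 1) * g i * g (i + 1))
    (k : ℕ) (hk : 1 ≤ k) :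
    ∀ m, k + 2 ≤ m → m ≤ N → g k * wordDown g m = wordDown g m * g (k + 1) := by
  intro m hm
  induction m, hm using Nat.le_induction with
  | base =>
    intro hN
    rw [show k + 2 = (k + 1) + 1 from rfl, wordDown_succ g (k+1) (by omega),
      wordDown_succ g k hk]
    have hD : Commute (g (k+1)) (wordDown g k) :=
      commute_wordDown_of_lt g N hcm (k+1) k (by omega) (by omega) (by omega)
    calc g k * (g (k+1) * (g k * wordDown g k))
        = g k * g (k+1) * g k * wordDown g k := by rw [mul_assoc, mul_assoc]
      _ = g (k+1) * g k * g (k+1) * wordDown g k := by rw [hbr k hk (by omega)]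
      _ = g (k+1) * g k * (wordDown g k * g (k+1)) := by
          rw [mul_assoc (g (k+1) * g k), hD.eq]
      _ = g (k+1) * (g k * wordDown g k) * g (k+1) := by
          rw [mul_assoc, mul_assoc, mul_assoc]
  | succ m hm ih =>
    intro hN
    rw [wordDown_succ g m (by omega)]
    have h1 : g k * g m = g m * g k := hcm k m hk (by omega) (by omega) (by omega)
      (Or.inl (by omega))
    calc g k * (g m * wordDown g m) = g m * (g k * wordDown g m) := by
          rw [← mul_assoc, h1, mul_assoc]
      _ = g m * (wordDown g m * g (k+1)) := by rw [ih (by omega)]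
      _ = g m * wordDown g m * g (k+1) := by rw [mul_assoc]

lemma wordUp_pass (g : ℕ → A) (N : ℕ)
    (hcm : ∀ i j, 1 ≤ i → i < N → 1 ≤ j → j < N → (i + 1 < j ∨ j + 1 < i) →
      g i * g j = g j * g i)
    (hbr : ∀ i, 1 ≤ i → i + 1 < N → g i * g (i + 1) * g i = g (i + 1) * g i * g (i + 1))
    (k : ℕ) (hk : 1 ≤ k) :
    ∀ m, k + 2 ≤ m → m ≤ N → wordUp g m * g k = g (k + 1) * wordUp g m := by
  intro m hm
  induction m, hm using Nat.le_induction with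
  | base =>
    intro hN
    rw [show k + 2 = (k + 1) + 1 from rfl, wordUp_succ g (k+1) (by omega),
      wordUp_succ g k hk]
    have hU : Commute (g (k+1)) (wordUp g k) :=
      commute_wordUp_of_lt g N hcm (k+1) k (by omega) (by omega) (by omega)
    calc wordUp g k * g k * g (k+1) * g k
        = wordUp g k * (g k * g (k+1) * g k) := by
          rw [mul_assoc, mul_assoc, ← mul_assoc (g k)]
      _ = wordUp g k * (g (k+1) * g k * g (k+1)) := by rw [hbr k hk (by omega)]
      _ = (wordUp g k * g (k+1)) * (g k * g (k+1)) := by simp only [mul_assoc]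
      _ = (g (k+1) * wordUp g k) * (g k * g (k+1)) := by rw [hU.eq]
      _ = g (k+1) * (wordUp g k * g k * g (k+1)) := by simp only [mul_assoc]
  | succ m hm ih =>
    intro hN
    rw [wordUp_succ g m (by omega)]
    have h1 : g m * g k = g k * g m := hcm m k (by omega) (by omega) hk (by omega)
      (Or.inr (by omega))
    calc wordUp g m * g m * g k = wordUp g m * g k * g m := by
          rw [mul_assoc, h1, mul_assoc]
      _ = g (k+1) * wordUp g m * g m := by rw [ih (by omega)]
      _ = g (k+1) * (wordUp g m * g m) := by rw [mul_assoc]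

lemma transpWord_succ_self (g : ℕ → A) (m : ℕ) : transpWord g m (m + 1) = g m := by
  unfold transpWord
  simp [Nat.sub_self]

lemma transpWord_succ (g : ℕ → A) (j m : ℕ) (hj : 1 ≤ j) (hjm : j < m) :
    transpWord g j (m + 1) = g m * transpWord g j m * g m := by
  have e1 : m + 1 - 1 - j = (m - 1 - j) + 1 := by omega
  have hdesc : (List.map (fun k => g (m + 1 - 1 - k)) (List.range (m + 1 - 1 - j))).prod
      = g m * (List.map (fun k => g (m - 1 - k)) (List.range (m - 1 - j))).prod := by
    rw [e1, List.range_succ_eq_map, List.map_cons, List.prod_cons, List.map_map]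
    have hmap : List.map ((fun k => g (m + 1 - 1 - k)) ∘ Nat.succ) (List.range (m - 1 - j)) =
        List.map (fun k => g (m - 1 - k)) (List.range (m - 1 - j)) := by
      apply List.map_congr_left
      intro a ha
      simp only [Function.comp_apply]
      congr 1; omega
    rw [hmap]
    have h0 : m + 1 - 1 - 0 = m := by omega
    rw [h0]
  have hasc : (List.map (fun k => g (j + 1 + k)) (List.range (m + 1 - 1 - j))).prod
      = (List.map (fun k => g (j + 1 + k)) (List.range (m - 1 - j))).prod * g m := by
    rw [e1, List.range_succ, List.map_append, List.prod_append]
    congr 1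
    simp only [List.map_cons, List.map_nil, List.prod_cons, List.prod_nil, mul_one]
    show g (j + 1 + (m - 1 - j)) = g m
    congr 1
    omega
  unfold transpWord
  rw [hdesc, hasc]
  simp only [mul_assoc]

lemma jmElt_succ (g : ℕ → A) (m : ℕ) (hm : 1 ≤ m) :
    jmElt g (m + 1) = g m * jmElt g m * g m + g m := by
  unfold jmElt
  rw [Finset.sum_Ico_succ_top (by omega : 1 ≤ m), transpWord_succ_self]
  congr 1
  rw [Finset.mul_sum, Finset.sum_mul]
  apply Finset.sum_congr rfl
  intro j hj
  simp only [Finset.mem_Ico] at hj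
  rw [transpWord_succ g j m hj.1 hj.2]

lemma commute_jmElt_of_lt (g : ℕ → A) (N : ℕ)
    (hcm : ∀ i j, 1 ≤ i → i < N → 1 ≤ j → j < N → (i + 1 < j ∨ j + 1 < i) →
      g i * g j = g j * g i)
    (p m : ℕ) (hp : 1 ≤ p) (hpN : p < N) (hm : m < p) :
    Commute (g p) (jmElt g m) := by
  apply Commute.sum_right
  intro j hj
  simp only [Finset.mem_Ico] at hj
  exact commute_transpWord _ _ _ _ hj.1 hj.2 (fun l hl hlm =>
    hcm p l hp hpN (by omega) (by omega) (Or.inr (by omega)))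

lemma jm_commute (g : ℕ → A) (N : ℕ)
    (hsq : ∀ i, 1 ≤ i → i < N → g i * g i = 1)
    (hcm : ∀ i j, 1 ≤ i → i < N → 1 ≤ j → j < N → (i + 1 < j ∨ j + 1 < i) →
      g i * g j = g j * g i)
    (hbr : ∀ i, 1 ≤ i → i + 1 < N → g i * g (i + 1) * g i = g (i + 1) * g i * g (i + 1))
    (k : ℕ) (hk : 1 ≤ k) :
    ∀ m, k + 2 ≤ m → m ≤ N → Commute (g k) (jmElt g m) := by
  intro m hm
  induction m, hm using Nat.le_induction with
  | base =>
    intro hN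
    have ha : g k * g k = 1 := hsq k hk (by omega)
    have hbr' : g k * g (k+1) * g k = g (k+1) * g k * g (k+1) := hbr k hk (by omega)
    have hP : Commute (g (k+1)) (jmElt g k) :=
      commute_jmElt_of_lt g N hcm (k+1) k (by omega) (by omega) (by omega)
    rw [show k + 2 = (k + 1) + 1 from rfl, jmElt_succ g (k+1) (by omega),
      jmElt_succ g k hk]
    set a := g k with hadef
    set b := g (k+1) with hbdef
    set P := jmElt g k with hPdef
    show a * (b * (a * P * a + a) * b + b) = (b * (a * P * a + a) * b + b) * a
    have key1 : a * (b * (a * P * a) * b) = b * (a * P * a) * b * a := by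
      calc a * (b * (a * P * a) * b)
          = (a * b * a) * P * (a * b) := by noncomm_ring
        _ = (b * a * b) * P * (a * b) := by rw [hbr']
        _ = b * a * (b * P) * (a * b) := by noncomm_ring
        _ = b * a * (P * b) * (a * b) := by rw [hP.eq]
        _ = b * a * P * (b * a * b) := by noncomm_ring
        _ = b * a * P * (a * b * a) := by rw [← hbr']
        _ = b * (a * P * a) * b * a := by noncomm_ring
    have r1 : a * (b * a * b) = b * a := by
      rw [← hbr', show a * (a * b * a) = a * a * (b * a) by noncomm_ring, ha, one_mul]
    have r2 : b * a * b * a = a * b := by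
      rw [← hbr', show a * b * a * a = a * b * (a * a) by noncomm_ring, ha, mul_one]
    calc a * (b * (a * P * a + a) * b + b)
        = a * (b * (a * P * a) * b) + (a * (b * a * b) + a * b) := by noncomm_ring
      _ = b * (a * P * a) * b * a + (b * a + a * b) := by rw [key1, r1]
      _ = b * (a * P * a) * b * a + (a * b + b * a) := by rw [add_comm (b*a)]
      _ = b * (a * P * a) * b * a + (b * a * b * a + b * a) := by rw [r2]
      _ = (b * (a * P * a + a) * b + b) * a := by noncomm_ring
  | succ m hm ih =>
    intro hN
    rw [jmElt_succ g m (by omega)]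
    have h1 : Commute (g k) (g m) := hcm k m hk (by omega) (by omega) (by omega)
      (Or.inl (by omega))
    exact ((h1.mul_right (ih (by omega))).mul_right h1).add_right h1

end aux2

section aux3
variable {A : Type*} [Ring A]

lemma pass5 (a b c d p f x1 x2 x3 x4 x5 : A)
    (k1 : a * x1 = x1 * b) (k2 : b * x2 = x2 * c) (k3 : c * x3 = x3 * d)
    (k4 : d * x4 = x4 * p) (k5 : p * x5 = x5 * f) :
    a * (x1 * x2 * x3 * x4 * x5) = x1 * x2 * x3 * x4 * x5 * f := by
  calc a * (x1 * x2 * x3 * x4 * x5)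
      = a * x1 * (x2 * x3 * x4 * x5) := by simp only [mul_assoc]
    _ = x1 * b * (x2 * x3 * x4 * x5) := by rw [k1]
    _ = x1 * (b * x2) * (x3 * x4 * x5) := by simp only [mul_assoc]
    _ = x1 * (x2 * c) * (x3 * x4 * x5) := by rw [k2]
    _ = x1 * x2 * (c * x3) * (x4 * x5) := by simp only [mul_assoc]
    _ = x1 * x2 * (x3 * d) * (x4 * x5) := by rw [k3]
    _ = x1 * x2 * x3 * (d * x4) * x5 := by simp only [mul_assoc]
    _ = x1 * x2 * x3 * (x4 * p) * x5 := by rw [k4]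
    _ = x1 * x2 * x3 * x4 * (p * x5) := by simp only [mul_assoc]
    _ = x1 * x2 * x3 * x4 * (x5 * f) := by rw [k5]
    _ = x1 * x2 * x3 * x4 * x5 * f := by simp only [mul_assoc]

lemma wordDown_one (g : ℕ → A) : wordDown g 1 = 1 := by
  unfold wordDown; simp

lemma wordUp_one (g : ℕ → A) : wordUp g 1 = 1 := by
  unfold wordUp; simp

lemma wordDown_split (g : ℕ → A) (M : ℕ) (hM : 2 ≤ M) :
    wordDown g M = ((List.range (M - 2)).map fun k => g (M - 1 - k)).prod * g 1 := by
  unfold wordDown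
  have e1 : M - 1 = (M - 2) + 1 := by omega
  rw [e1, List.range_succ, List.map_append, List.prod_append]
  simp only [List.map_cons, List.map_nil, List.prod_cons, List.prod_nil, mul_one]
  have h0 : M - 2 + 1 - (M - 2) = 1 := by omega
  rw [h0]

lemma wordUp_split (g : ℕ → A) (M : ℕ) (hM : 2 ≤ M) :
    wordUp g M = g 1 * ((List.range (M - 2)).map fun k => g (k + 2)).prod := by
  unfold wordUp
  have e1 : M - 1 = (M - 2) + 1 := by omega
  rw [e1, List.range_succ_eq_map, List.map_cons, List.prod_cons, List.map_map]
  have hmap : List.map ((fun k => g (k + 1)) ∘ Nat.succ) (List.range (M - 2)) =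
      List.map (fun k => g (k + 2)) (List.range (M - 2)) := by
    apply List.map_congr_left
    intro a ha
    simp only [Function.comp_apply]
  rw [hmap]

lemma transpWord_one_eq (g : ℕ → A) (M : ℕ) (hM : 2 ≤ M) :
    transpWord g 1 M = ((List.range (M - 2)).map fun k => g (M - 1 - k)).prod * g 1 *
      ((List.range (M - 2)).map fun k => g (k + 2)).prod := by
  unfold transpWord
  have e1 : M - 1 - 1 = M - 2 := by omega
  rw [e1]
  have hmap : List.map (fun k => g (1 + 1 + k)) (List.range (M - 2)) =
      List.map (fun k => g (k + 2)) (List.range (M - 2)) := by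
    apply List.map_congr_left
    intro a ha
    congr 1
    omega
  rw [hmap]

end aux3

/-- In the walled Brauer algebra `B_{r,t}(δ)` (rendered by its presentation),
the Jucys–Murphy-like elements `y_i = δ₁ + ∑_{j<i} e_{i,j} − L_i` satisfy
`y_i y_{i+1} = y_{i+1} y_i` for `1 ≤ i < min(r,t)`. -/
theorem walledBrauer_y_commute (R : Type*) [CommRing R] (A : Type*) [Ring A] [Algebra R A]
    (r t : ℕ) (δ : R) (s sb : ℕ → A) (e : A)
    (h1 : ∀ i, 1 ≤ i → i < r → s i * s i = 1)
    (h2 : ∀ i j, 1 ≤ i → i < r → 1 ≤ j → j < r → (i + 1 < j ∨ j + 1 < i) →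
      s i * s j = s j * s i)
    (h3 : ∀ i, 1 ≤ i → i + 1 < r → s i * s (i + 1) * s i = s (i + 1) * s i * s (i + 1))
    (h4 : ∀ i, 2 ≤ i → i < r → s i * e = e * s i)
    (h5 : e * s 1 * e = e)
    (h6 : e * e = δ • e)
    (h7 : ∀ i j, 1 ≤ i → i < r → 1 ≤ j → j < t → s i * sb j = sb j * s i)
    (h8 : ∀ i, 1 ≤ i → i < t → sb i * sb i = 1)
    (h9 : ∀ i j, 1 ≤ i → i < t → 1 ≤ j → j < t → (i + 1 < j ∨ j + 1 < i) →
      sb i * sb j = sb j * sb i)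
    (h10 : ∀ i, 1 ≤ i → i + 1 < t → sb i * sb (i + 1) * sb i = sb (i + 1) * sb i * sb (i + 1))
    (h11 : ∀ i, 2 ≤ i → i < t → sb i * e = e * sb i)
    (h12 : e * sb 1 * e = e)
    (h13 : e * s 1 * sb 1 * e * s 1 = e * s 1 * sb 1 * e * sb 1)
    (h14 : s 1 * e * s 1 * sb 1 * e = sb 1 * e * s 1 * sb 1 * e) (δ1 : R) :
    let y := fun i => algebraMap R A δ1 + (∑ j ∈ Finset.Ico 1 i, eElt s sb e i j) - jmElt s i
    ∀ i, 1 ≤ i → i < min r t → y i * y (i + 1) = y (i + 1) * y i := by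
  intro y i hi1 him
  obtain ⟨hir, hit⟩ : i < r ∧ i < t := lt_min_iff.mp him
  have hy : ∀ n, y n = algebraMap R A δ1 + (∑ j ∈ Finset.Ico 1 n, eElt s sb e n j)
      - jmElt s n := fun n => rfl
  -- Commutation of y (i+1) with the generators s k, 1 ≤ k ≤ i - 1
  have hS : ∀ k, 1 ≤ k → k + 2 ≤ i + 1 → Commute (s k) (y (i + 1)) := by
    intro k hk hk2
    rw [hy]
    have c0 : Commute (s k) (algebraMap R A δ1) := (Algebra.commutes δ1 (s k)).symm
    have cJ : Commute (s k) (jmElt s (i + 1)) :=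
      jm_commute s r h1 h2 h3 k hk (i + 1) hk2 (by omega)
    have cE : Commute (s k) (∑ j ∈ Finset.Ico 1 (i + 1), eElt s sb e (i + 1) j) := by
      apply Commute.sum_right
      intro j hj
      simp only [Finset.mem_Ico] at hj
      have k1 : s k * wordDown sb j = wordDown sb j * s k :=
        commute_wordDown (s k) sb j (fun l hl hlj =>
          h7 k l hk (by omega) hl (by omega))
      have k2 : s k * wordDown s (i + 1) = wordDown s (i + 1) * s (k + 1) :=
        wordDown_pass s r h2 h3 k hk (i + 1) hk2 (by omega)
      have k3 : s (k + 1) * e = e * s (k + 1) := h4 (k + 1) (by omega) (by omega)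
      have k4 : s (k + 1) * wordUp s (i + 1) = wordUp s (i + 1) * s k :=
        (wordUp_pass s r h2 h3 k hk (i + 1) hk2 (by omega)).symm
      have k5 : s k * wordUp sb j = wordUp sb j * s k :=
        commute_wordUp (s k) sb j (fun l hl hlj =>
          h7 k l hk (by omega) hl (by omega))
      exact pass5 _ _ _ _ _ _ _ _ _ _ _ k1 k2 k3 k4 k5
    exact (c0.add_right cE).sub_right cJ
  -- Commutation of y (i+1) with the generators sb k, 1 ≤ k ≤ i - 1
  have hSb : ∀ k, 1 ≤ k → k + 2 ≤ i + 1 → Commute (sb k) (y (i + 1)) := by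
    intro k hk hk2
    rw [hy]
    have hsbk : sb k * sb k = 1 := h8 k hk (by omega)
    have c0 : Commute (sb k) (algebraMap R A δ1) := (Algebra.commutes δ1 (sb k)).symm
    have cJ : Commute (sb k) (jmElt s (i + 1)) := by
      apply Commute.sum_right
      intro j hj
      simp only [Finset.mem_Ico] at hj
      exact commute_transpWord _ _ _ _ hj.1 hj.2 (fun l hl hlm =>
        (h7 l k (by omega) (by omega) hk (by omega)).symm)
    have cE : Commute (sb k) (∑ j ∈ Finset.Ico 1 (i + 1), eElt s sb e (i + 1) j) := by
      set f : ℕ → A := fun j => eElt s sb e (i + 1) j with hf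
      have hrec : f (k + 1) = sb k * f k * sb k := by
        show eElt s sb e (i + 1) (k + 1) = sb k * eElt s sb e (i + 1) k * sb k
        unfold eElt
        rw [wordDown_succ sb k hk, wordUp_succ sb k hk]
        simp only [mul_assoc]
      have key : ∀ j ∈ Finset.Ico 1 (i + 1),
          sb k * f j * sb k = f (Equiv.swap k (k + 1) j) := by
        intro j hj
        simp only [Finset.mem_Ico] at hj
        rcases eq_or_ne j k with rfl | hjk
        · rw [Equiv.swap_apply_left, hrec]
        · rcases eq_or_ne j (k + 1) with rfl | hjk1
          · rw [Equiv.swap_apply_right, hrec]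
            calc sb k * (sb k * f k * sb k) * sb k
                = (sb k * sb k) * f k * (sb k * sb k) := by simp only [mul_assoc]
              _ = f k := by rw [hsbk, one_mul, mul_one]
          · rw [Equiv.swap_apply_of_ne_of_ne hjk hjk1]
            have hcomm : sb k * f j = f j * sb k := by
              show sb k * eElt s sb e (i + 1) j = eElt s sb e (i + 1) j * sb k
              unfold eElt
              rcases lt_or_gt_of_ne hjk with hlt | hgt
              · -- j < k : everything commutes with sb k
                have k1 : sb k * wordDown sb j = wordDown sb j * sb k :=
                  commute_wordDown (sb k) sb j (fun l hl hlj =>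
                    h9 k l hk (by omega) hl (by omega) (Or.inr (by omega)))
                have k2 : sb k * wordDown s (i + 1) = wordDown s (i + 1) * sb k :=
                  commute_wordDown (sb k) s (i + 1) (fun l hl hli =>
                    (h7 l k hl (by omega) hk (by omega)).symm)
                have k3 : sb k * e = e * sb k := h11 k (by omega) (by omega)
                have k4 : sb k * wordUp s (i + 1) = wordUp s (i + 1) * sb k :=
                  commute_wordUp (sb k) s (i + 1) (fun l hl hli =>
                    (h7 l k hl (by omega) hk (by omega)).symm)
                have k5 : sb k * wordUp sb j = wordUp sb j * sb k :=
                  commute_wordUp (sb k) sb j (fun l hl hlj =>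
                    h9 k l hk (by omega) hl (by omega) (Or.inr (by omega)))
                exact pass5 _ _ _ _ _ _ _ _ _ _ _ k1 k2 k3 k4 k5
              · -- j > k + 1
                have k1 : sb k * wordDown sb j = wordDown sb j * sb (k + 1) :=
                  wordDown_pass sb t h9 h10 k hk j (by omega) (by omega)
                have k2 : sb (k + 1) * wordDown s (i + 1) = wordDown s (i + 1) * sb (k + 1) :=
                  commute_wordDown (sb (k + 1)) s (i + 1) (fun l hl hli =>
                    (h7 l (k + 1) hl (by omega) (by omega) (by omega)).symm)
                have k3 : sb (k + 1) * e = e * sb (k + 1) := h11 (k + 1) (by omega) (by omega)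
                have k4 : sb (k + 1) * wordUp s (i + 1) = wordUp s (i + 1) * sb (k + 1) :=
                  commute_wordUp (sb (k + 1)) s (i + 1) (fun l hl hli =>
                    (h7 l (k + 1) hl (by omega) (by omega) (by omega)).symm)
                have k5 : sb (k + 1) * wordUp sb j = wordUp sb j * sb k :=
                  (wordUp_pass sb t h9 h10 k hk j (by omega) (by omega)).symm
                exact pass5 _ _ _ _ _ _ _ _ _ _ _ k1 k2 k3 k4 k5
            calc sb k * f j * sb k = f j * (sb k * sb k) := by rw [hcomm, mul_assoc]
              _ = f j := by rw [hsbk, mul_one]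
      have hconj : sb k * (∑ j ∈ Finset.Ico 1 (i + 1), f j) * sb k
          = ∑ j ∈ Finset.Ico 1 (i + 1), f j := by
        rw [Finset.mul_sum, Finset.sum_mul]
        calc ∑ j ∈ Finset.Ico 1 (i + 1), sb k * f j * sb k
            = ∑ j ∈ Finset.Ico 1 (i + 1), f (Equiv.swap k (k + 1) j) :=
              Finset.sum_congr rfl key
          _ = ∑ j ∈ Finset.Ico 1 (i + 1), f j := by
              refine Finset.sum_equiv (Equiv.swap k (k + 1)) ?_ (fun j _ => rfl)
              intro j
              simp only [Finset.mem_Ico]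
              rcases eq_or_ne j k with rfl | hjk
              · rw [Equiv.swap_apply_left]; omega
              · rcases eq_or_ne j (k + 1) with rfl | hjk1
                · rw [Equiv.swap_apply_right]; omega
                · rw [Equiv.swap_apply_of_ne_of_ne hjk hjk1]
      show sb k * (∑ j ∈ Finset.Ico 1 (i + 1), f j)
          = (∑ j ∈ Finset.Ico 1 (i + 1), f j) * sb k
      calc sb k * (∑ j ∈ Finset.Ico 1 (i + 1), f j)
          = sb k * (∑ j ∈ Finset.Ico 1 (i + 1), f j) * (sb k * sb k) := by
            rw [hsbk, mul_one]
        _ = (sb k * (∑ j ∈ Finset.Ico 1 (i + 1), f j) * sb k) * sb k := by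
            simp only [mul_assoc]
        _ = (∑ j ∈ Finset.Ico 1 (i + 1), f j) * sb k := by rw [hconj]
    exact (c0.add_right cE).sub_right cJ
  -- Commutation of y (i+1) with e (when i ≥ 2)
  have hE : 2 ≤ i → Commute e (y (i + 1)) := by
    intro hi2
    rw [hy]
    set M := i + 1 with hM
    have hM3 : 3 ≤ M := by omega
    set C : A := ((List.range (M - 2)).map fun k => s (M - 1 - k)).prod with hC
    set C' : A := ((List.range (M - 2)).map fun k => s (k + 2)).prod with hC'
    have hD : wordDown s M = C * s 1 := wordDown_split s M (by omega)
    have hU : wordUp s M = s 1 * C' := wordUp_split s M (by omega)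
    have hT : transpWord s 1 M = C * s 1 * C' := transpWord_one_eq s M (by omega)
    have hCe : Commute e C :=
      commute_range_prod e _ _ (fun k hk => (h4 (M - 1 - k) (by omega) (by omega)).symm)
    have hC'e : Commute e C' :=
      commute_range_prod e _ _ (fun k hk => (h4 (k + 2) (by omega) (by omega)).symm)
    have hCsb : Commute (sb 1) C :=
      commute_range_prod _ _ _ (fun k hk =>
        (h7 (M - 1 - k) 1 (by omega) (by omega) (by omega) (by omega)).symm)
    have hC'sb : Commute (sb 1) C' :=
      commute_range_prod _ _ _ (fun k hk =>
        (h7 (k + 2) 1 (by omega) (by omega) (by omega) (by omega)).symm)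
    have hss : s 1 * s 1 = 1 := h1 1 le_rfl (by omega)
    have hbb : sb 1 * sb 1 = 1 := h8 1 le_rfl (by omega)
    have hsbs : s 1 * sb 1 = sb 1 * s 1 := h7 1 1 le_rfl (by omega) le_rfl (by omega)
    -- the core commutation : e commutes with sb1 * (s1 * e * s1) * sb1
    have E1 : e * s 1 * sb 1 * e * s 1 * sb 1 = e * s 1 * sb 1 * e := by
      rw [h13, mul_assoc, hbb, mul_one]
    have E2 : s 1 * (sb 1 * (e * s 1 * sb 1 * e)) = e * s 1 * sb 1 * e := by
      rw [show sb 1 * (e * s 1 * sb 1 * e) = sb 1 * e * s 1 * sb 1 * e by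
        simp only [mul_assoc], ← h14]
      rw [show s 1 * (s 1 * e * s 1 * sb 1 * e) = (s 1 * s 1) * (e * s 1 * sb 1 * e) by
        simp only [mul_assoc], hss, one_mul]
    have core : Commute e (sb 1 * (s 1 * e * s 1) * sb 1) := by
      show e * (sb 1 * (s 1 * e * s 1) * sb 1) = (sb 1 * (s 1 * e * s 1) * sb 1) * e
      have l1 : e * (sb 1 * (s 1 * e * s 1) * sb 1) = e * s 1 * sb 1 * e := by
        calc e * (sb 1 * (s 1 * e * s 1) * sb 1)
            = e * (sb 1 * s 1) * e * s 1 * sb 1 := by simp only [mul_assoc]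
          _ = e * (s 1 * sb 1) * e * s 1 * sb 1 := by rw [hsbs]
          _ = e * s 1 * sb 1 * e * s 1 * sb 1 := by simp only [mul_assoc]
          _ = e * s 1 * sb 1 * e := E1
      have l2 : (sb 1 * (s 1 * e * s 1) * sb 1) * e = e * s 1 * sb 1 * e := by
        calc (sb 1 * (s 1 * e * s 1) * sb 1) * e
            = (sb 1 * s 1) * (e * s 1 * sb 1 * e) := by simp only [mul_assoc]
          _ = (s 1 * sb 1) * (e * s 1 * sb 1 * e) := by rw [hsbs]
          _ = s 1 * (sb 1 * (e * s 1 * sb 1 * e)) := by simp only [mul_assoc]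
          _ = e * s 1 * sb 1 * e := E2
      rw [l1, l2]
    -- X = wordDown s M * e * wordUp s M and its normal form
    have hX : wordDown s M * e * wordUp s M = C * (s 1 * e * s 1) * C' := by
      rw [hD, hU]; simp only [mul_assoc]
    have hswap1 : sb 1 * (C * (s 1 * e * s 1) * C') * sb 1
        = C * (sb 1 * (s 1 * e * s 1) * sb 1) * C' := by
      calc sb 1 * (C * (s 1 * e * s 1) * C') * sb 1
          = (sb 1 * C) * ((s 1 * e * s 1) * (C' * sb 1)) := by simp only [mul_assoc]
        _ = (C * sb 1) * ((s 1 * e * s 1) * (sb 1 * C')) := by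
            rw [hCsb.eq, ← hC'sb.eq]
        _ = C * (sb 1 * (s 1 * e * s 1) * sb 1) * C' := by simp only [mul_assoc]
    have coreX : Commute e (sb 1 * (wordDown s M * e * wordUp s M) * sb 1) := by
      rw [hX, hswap1]
      exact (hCe.mul_right core).mul_right hC'e
    -- commutation with each e_{M,j}, j ≥ 2
    have cEj : ∀ j, 2 ≤ j → j < M → Commute e (eElt s sb e M j) := by
      intro j hj2 hjM
      have hfact : eElt s sb e M j
          = ((List.range (j - 2)).map fun k => sb (j - 1 - k)).prod
            * (sb 1 * (wordDown s M * e * wordUp s M) * sb 1)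
            * ((List.range (j - 2)).map fun k => sb (k + 2)).prod := by
        unfold eElt
        rw [wordDown_split sb j hj2, wordUp_split sb j hj2]
        simp only [mul_assoc]
      rw [hfact]
      have hCbe : Commute e (((List.range (j - 2)).map fun k => sb (j - 1 - k)).prod) :=
        commute_range_prod e _ _ (fun k hk => (h11 (j - 1 - k) (by omega) (by omega)).symm)
      have hCb'e : Commute e (((List.range (j - 2)).map fun k => sb (k + 2)).prod) :=
        commute_range_prod e _ _ (fun k hk => (h11 (k + 2) (by omega) (by omega)).symm)
      exact (hCbe.mul_right coreX).mul_right hCb'e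
    -- the pair e_{M,1} - (1,M)
    have hXform : eElt s sb e M 1 = C * (s 1 * e * s 1) * C' := by
      unfold eElt
      rw [wordDown_one, wordUp_one, one_mul, mul_one]
      exact hX
    have moveL : ∀ z : A, e * (C * z * C') = C * (e * z) * C' := by
      intro z
      calc e * (C * z * C') = (e * C) * (z * C') := by simp only [mul_assoc]
        _ = (C * e) * (z * C') := by rw [hCe.eq]
        _ = C * (e * z) * C' := by simp only [mul_assoc]
    have moveR : ∀ z : A, (C * z * C') * e = C * (z * e) * C' := by
      intro z
      calc (C * z * C') * e = C * (z * (C' * e)) := by simp only [mul_assoc]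
        _ = C * (z * (e * C')) := by rw [← hC'e.eq]
        _ = C * (z * e) * C' := by simp only [mul_assoc]
    have eL : e * eElt s sb e M 1 = e * transpWord s 1 M := by
      rw [hXform, hT, moveL, moveL]
      congr 2
      calc e * (s 1 * e * s 1) = e * s 1 * e * s 1 := by simp only [mul_assoc]
        _ = e * s 1 := by rw [h5]
    have eR : eElt s sb e M 1 * e = transpWord s 1 M * e := by
      rw [hXform, hT, moveR, moveR]
      congr 2
      calc (s 1 * e * s 1) * e = s 1 * (e * s 1 * e) := by simp only [mul_assoc]
        _ = s 1 * e := by rw [h5]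
    have pairC : Commute e (eElt s sb e M 1 - transpWord s 1 M) := by
      show e * (eElt s sb e M 1 - transpWord s 1 M)
          = (eElt s sb e M 1 - transpWord s 1 M) * e
      rw [mul_sub, sub_mul, eL, eR, sub_self, sub_self]
    -- assemble
    have hsplitE : (∑ j ∈ Finset.Ico 1 M, eElt s sb e M j)
        = eElt s sb e M 1 + ∑ j ∈ Finset.Ico 2 M, eElt s sb e M j :=
      Finset.sum_eq_sum_Ico_succ_bot (by omega) _
    have hsplitL : jmElt s M = transpWord s 1 M + ∑ j ∈ Finset.Ico 2 M, transpWord s j M := by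
      unfold jmElt
      exact Finset.sum_eq_sum_Ico_succ_bot (by omega) _
    have c2E : Commute e (∑ j ∈ Finset.Ico 2 M, eElt s sb e M j) := by
      apply Commute.sum_right
      intro j hj
      simp only [Finset.mem_Ico] at hj
      exact cEj j hj.1 hj.2
    have c2L : Commute e (∑ j ∈ Finset.Ico 2 M, transpWord s j M) := by
      apply Commute.sum_right
      intro j hj
      simp only [Finset.mem_Ico] at hj
      exact commute_transpWord e s j M (by omega) hj.2 (fun l hl hlM =>
        (h4 l (by omega) (by omega)).symm)
    have c0 : Commute e (algebraMap R A δ1) := (Algebra.commutes δ1 e).symm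
    rw [hsplitE, hsplitL]
    have hrearr : algebraMap R A δ1
          + (eElt s sb e M 1 + ∑ j ∈ Finset.Ico 2 M, eElt s sb e M j)
          - (transpWord s 1 M + ∑ j ∈ Finset.Ico 2 M, transpWord s j M)
        = (algebraMap R A δ1 + (∑ j ∈ Finset.Ico 2 M, eElt s sb e M j)
            - ∑ j ∈ Finset.Ico 2 M, transpWord s j M)
          + (eElt s sb e M 1 - transpWord s 1 M) := by
      abel
    rw [hrearr]
    exact ((c0.add_right c2E).sub_right c2L).add_right pairC
  -- assemble: y (i+1) commutes with y i
  have main : Commute (y (i + 1)) (y i) := by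
    conv_rhs => rw [hy i]
    have c0 : Commute (y (i + 1)) (algebraMap R A δ1) := (Algebra.commutes δ1 (y (i + 1))).symm
    have cE : Commute (y (i + 1)) (∑ j ∈ Finset.Ico 1 i, eElt s sb e i j) := by
      apply Commute.sum_right
      intro j hj
      simp only [Finset.mem_Ico] at hj
      have hi2 : 2 ≤ i := by omega
      have cDb : Commute (y (i + 1)) (wordDown sb j) :=
        commute_wordDown _ sb j (fun l hl hlj => (hSb l hl (by omega)).symm)
      have cD : Commute (y (i + 1)) (wordDown s i) :=
        commute_wordDown _ s i (fun l hl hli => (hS l hl (by omega)).symm)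
      have ce : Commute (y (i + 1)) e := (hE hi2).symm
      have cU : Commute (y (i + 1)) (wordUp s i) :=
        commute_wordUp _ s i (fun l hl hli => (hS l hl (by omega)).symm)
      have cUb : Commute (y (i + 1)) (wordUp sb j) :=
        commute_wordUp _ sb j (fun l hl hlj => (hSb l hl (by omega)).symm)
      exact (((cDb.mul_right cD).mul_right ce).mul_right cU).mul_right cUb
    have cJ : Commute (y (i + 1)) (jmElt s i) := by
      apply Commute.sum_right
      intro j hj
      simp only [Finset.mem_Ico] at hj
      exact commute_transpWord _ s j i hj.1 hj.2 (fun l hl hli =>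
        (hS l (by omega) (by omega)).symm)
    exact (c0.add_right cE).sub_right cJ
  exact main.symm
end

section
/- Let B^aff_{r,t} be the affine walled Brauer algebra and suppose e_1 is torsion-free over R[ω_2, ω_3, ..., ω̄_0, ω̄_1, ...]. Then ω̄_0 = ω_0, ω̄_1 = −ω_1, and for each k ≥ 2, ω̄_k lies in the subring R[ω_2, ..., ω_k] generated by ω_2,...,ω_k. -/
lemma awB_lemC {A : Type*} [Ring A] (e x xb : A) (omb : ℕ → A)
    (hexb : e * xb = -(e * x))
    (hxe : x * e = -(xb * e))
    (hcomm : x * xb = xb * x + e * x - x * e)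
    (h25 : ∀ k : ℕ, e * xb ^ k * e = omb k * e) :
    ∀ m, e * x * xb ^ m = e * xb ^ m * x - omb 0 * (e * xb ^ m) + omb m * e := by
  intro m
  induction m with
  | zero => simp only [pow_zero, mul_one]; abel
  | succ m ih =>
    have hstep : e * x * xb ^ (m + 1) = (e * x * xb ^ m) * xb := by
      rw [pow_succ, ← mul_assoc]
    have hkey : e * xb ^ m * x * xb
        = e * xb ^ (m + 1) * x + omb m * (e * x) + omb (m + 1) * e := by
      have e1 : e * xb ^ m * (xb * x) = e * xb ^ (m + 1) * x := by
        rw [pow_succ, ← mul_assoc, ← mul_assoc]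
      have e2 : e * xb ^ m * (e * x) = omb m * (e * x) := by
        rw [← mul_assoc, h25 m, mul_assoc]
      have e3 : e * xb ^ m * (x * e) = -(omb (m + 1) * e) := by
        rw [hxe, mul_neg, ← mul_assoc, mul_assoc e (xb ^ m) xb, ← pow_succ, h25 (m + 1)]
      calc e * xb ^ m * x * xb = e * xb ^ m * (x * xb) := by rw [mul_assoc]
        _ = e * xb ^ m * (xb * x) + e * xb ^ m * (e * x) - e * xb ^ m * (x * e) := by
            rw [hcomm, mul_sub, mul_add]
        _ = e * xb ^ (m + 1) * x + omb m * (e * x) + omb (m + 1) * e := by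
            rw [e1, e2, e3]; abel
    rw [hstep, ih, add_mul, sub_mul, hkey, mul_assoc (omb 0), mul_assoc (omb m),
      mul_assoc e (xb ^ m) xb, ← pow_succ, hexb, mul_neg]
    abel

/-- The subalgebra `R[ω₂, …, ω_k]`. -/
def awT (R : Type*) [CommRing R] {A : Type*} [Ring A] [Algebra R A] (om : ℕ → A) (k : ℕ) :
    Subalgebra R A := Algebra.adjoin R (om '' {i | 2 ≤ i ∧ i ≤ k})

/-- In the affine walled Brauer algebra `B^aff_{r,t}` (rendered by its
presentation: any `R`-algebra with elements `e₁, x₁, x̄₁, s_i, s̄_j` and central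
families `ω_k, ω̄_k` satisfying the 26 defining relations), if `e₁` is
torsion-free over `R[ω₂, ω₃, …, ω̄₀, ω̄₁, …]`, then `ω̄₀ = ω₀`, `ω̄₁ = −ω₁`, and
for each `k ≥ 2`, `ω̄_k` lies in the subalgebra `R[ω₂, …, ω_k]`. -/
theorem affineWalledBrauer_omegaBar (R : Type*) [CommRing R] (A : Type*) [Ring A] [Algebra R A]
    (r t : ℕ) (ω0 ω1 : R) (s sb : ℕ → A) (e x xb : A) (om omb : ℕ → A)
    (hom0 : om 0 = algebraMap R A ω0) (hom1 : om 1 = algebraMap R A ω1)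
    (hcom : ∀ k, Commute (om k) e ∧ Commute (om k) x ∧ Commute (om k) xb ∧
      (∀ i, Commute (om k) (s i)) ∧ (∀ j, Commute (om k) (sb j)) ∧
      (∀ l, Commute (om k) (om l)) ∧ (∀ l, Commute (om k) (omb l)))
    (hcomb : ∀ k, Commute (omb k) e ∧ Commute (omb k) x ∧ Commute (omb k) xb ∧
      (∀ i, Commute (omb k) (s i)) ∧ (∀ j, Commute (omb k) (sb j)) ∧
      (∀ l, Commute (omb k) (omb l)))
    (h1 : ∀ i, 1 ≤ i → i < r → s i * s i = 1)
    (h2 : ∀ i j, 1 ≤ i → i < r → 1 ≤ j → j < r → (i + 1 < j ∨ j + 1 < i) →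
      s i * s j = s j * s i)
    (h3 : ∀ i, 1 ≤ i → i + 1 < r → s i * s (i + 1) * s i = s (i + 1) * s i * s (i + 1))
    (h4 : ∀ i, 2 ≤ i → i < r → s i * e = e * s i)
    (h5 : e * s 1 * e = e)
    (h6 : e * e = om 0 * e)
    (h7 : ∀ i j, 1 ≤ i → i < r → 1 ≤ j → j < t → s i * sb j = sb j * s i)
    (h8 : e * (x + xb) = 0 ∧ (x + xb) * e = 0)
    (h9 : e * (s 1 * x * s 1) = (s 1 * x * s 1) * e)
    (h10 : ∀ i, 2 ≤ i → i < r → s i * x = x * s i)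
    (h11 : ∀ i, 1 ≤ i → i < r → s i * xb = xb * s i)
    (h12 : ∀ k : ℕ, e * x ^ k * e = om k * e)
    (h13 : x * (s 1 * x * s 1 - s 1) = (s 1 * x * s 1 - s 1) * x)
    (h14 : ∀ i, 1 ≤ i → i < t → sb i * sb i = 1)
    (h15 : ∀ i j, 1 ≤ i → i < t → 1 ≤ j → j < t → (i + 1 < j ∨ j + 1 < i) →
      sb i * sb j = sb j * sb i)
    (h16 : ∀ i, 1 ≤ i → i + 1 < t → sb i * sb (i + 1) * sb i = sb (i + 1) * sb i * sb (i + 1))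
    (h17 : ∀ i, 2 ≤ i → i < t → sb i * e = e * sb i)
    (h18 : e * sb 1 * e = e)
    (h19 : e * s 1 * sb 1 * e * s 1 = e * s 1 * sb 1 * e * sb 1)
    (h20 : s 1 * e * s 1 * sb 1 * e = sb 1 * e * s 1 * sb 1 * e)
    (h21 : x * (e + xb) = (e + xb) * x)
    (h22 : e * (sb 1 * xb * sb 1) = (sb 1 * xb * sb 1) * e)
    (h23 : ∀ i, 2 ≤ i → i < t → sb i * xb = xb * sb i)
    (h24 : ∀ i, 1 ≤ i → i < t → sb i * x = x * sb i)
    (h25 : ∀ k : ℕ, e * xb ^ k * e = omb k * e)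
    (h26 : xb * (sb 1 * xb * sb 1 - sb 1) = (sb 1 * xb * sb 1 - sb 1) * xb)
    (htf : ∀ z ∈ Algebra.adjoin R (Set.range om ∪ Set.range omb), z * e = 0 → z = 0) :
    omb 0 = om 0 ∧ omb 1 = -om 1 ∧
    ∀ k, 2 ≤ k → omb k ∈ Algebra.adjoin R (om '' {i | 2 ≤ i ∧ i ≤ k}) := by
  obtain ⟨h8a, h8b⟩ := h8
  rw [mul_add] at h8a
  rw [add_mul] at h8b
  have hexb : e * xb = -(e * x) := eq_neg_of_add_eq_zero_left (by rw [add_comm]; exact h8a)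
  have hxe : x * e = -(xb * e) := eq_neg_of_add_eq_zero_right (by rw [add_comm]; exact h8b)
  have hcomm : x * xb = xb * x + e * x - x * e := by
    rw [mul_add, add_mul] at h21
    rw [eq_sub_iff_add_eq, add_comm (x * xb) (x * e), h21]
    exact add_comm _ _
  have hbig : ∀ {k}, omb k ∈ Algebra.adjoin R (Set.range om ∪ Set.range omb) :=
    fun {k} => Algebra.subset_adjoin (Set.mem_union_right _ ⟨k, rfl⟩)
  have hbigom : ∀ {k}, om k ∈ Algebra.adjoin R (Set.range om ∪ Set.range omb) :=
    fun {k} => Algebra.subset_adjoin (Set.mem_union_left _ ⟨k, rfl⟩)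
  -- omb 0 = om 0
  have homb0 : omb 0 = om 0 := by
    have h0 := h25 0
    rw [pow_zero, mul_one, h6] at h0
    have hz : (omb 0 - om 0) * e = 0 := by rw [sub_mul, ← h0, sub_self]
    exact sub_eq_zero.mp (htf _ (Subalgebra.sub_mem _ hbig hbigom) hz)
  -- omb 1 = - om 1
  have homb1 : omb 1 = -om 1 := by
    have h1' := h25 1
    rw [pow_one, hexb, neg_mul] at h1'
    have h12' := h12 1
    rw [pow_one] at h12'
    rw [h12'] at h1'
    have hz : (omb 1 + om 1) * e = 0 := by rw [add_mul, ← h1', neg_add_cancel]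
    exact eq_neg_of_add_eq_zero_left (htf _ (Subalgebra.add_mem _ hbig hbigom) hz)
  have lemC := awB_lemC e x xb omb hexb hxe hcomm h25
  have lemB : ∀ m, e * xb ^ (m + 1) = -(e * xb ^ m * x) + omb 0 * (e * xb ^ m) - omb m * e := by
    intro m
    have h' : e * xb ^ (m + 1) = -(e * x * xb ^ m) := by
      rw [pow_succ', ← mul_assoc, hexb, neg_mul]
    rw [h', lemC m]; abel
  have Tmono : ∀ {j k : ℕ}, j ≤ k → awT R om j ≤ awT R om k := fun hjk =>
    Algebra.adjoin_mono (Set.image_mono (fun i hi => ⟨hi.1, hi.2.trans hjk⟩))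
  have homT : ∀ {k i : ℕ}, i ≤ k → om i ∈ awT R om k := by
    intro k i hik
    match i with
    | 0 => rw [hom0]; exact Subalgebra.algebraMap_mem _ _
    | 1 => rw [hom1]; exact Subalgebra.algebraMap_mem _ _
    | (n + 2) => exact Algebra.subset_adjoin ⟨n + 2, ⟨by omega, hik⟩, rfl⟩
  have hTbig : ∀ {k}, awT R om k ≤ Algebra.adjoin R (Set.range om ∪ Set.range omb) :=
    fun {k} => Algebra.adjoin_mono (fun z hz => Set.mem_union_left _ (by
      obtain ⟨i, -, rfl⟩ := hz; exact ⟨i, rfl⟩))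
  have key : ∀ k : ℕ, (∃ c : ℕ → A, (∀ i, c i ∈ awT R om k) ∧
      e * xb ^ k = ∑ i ∈ Finset.range (k + 1), c i * (e * x ^ i)) ∧ omb k ∈ awT R om k := by
    intro k
    induction k using Nat.strong_induction_on with
    | _ k ih =>
      have part1 : ∃ c : ℕ → A, (∀ i, c i ∈ awT R om k) ∧
          e * xb ^ k = ∑ i ∈ Finset.range (k + 1), c i * (e * x ^ i) := by
        match k with
        | 0 =>
          refine ⟨fun _ => 1, fun i => Subalgebra.one_mem _, ?_⟩
          simp
        | (m + 1) =>
          obtain ⟨⟨c', hc', heq⟩, hombm'⟩ := ih m (Nat.lt_succ_self m)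
          have hombm : omb m ∈ awT R om (m + 1) := Tmono (Nat.le_succ m) hombm'
          obtain ⟨d, hdd⟩ : ∃ d : ℕ → A, d = fun i => if i < m + 1 then c' i else 0 :=
            ⟨_, rfl⟩
          obtain ⟨dp, hdpd⟩ : ∃ dp : ℕ → A, dp = fun i => if i = 0 then omb m else d (i - 1) :=
            ⟨_, rfl⟩
          have hd' : ∀ j, d j ∈ awT R om (m + 1) := by
            intro j; rw [hdd]; dsimp only; split
            · exact Tmono (Nat.le_succ m) (hc' j)
            · exact Subalgebra.zero_mem _
          refine ⟨fun i => omb 0 * d i - dp i, ?_, ?_⟩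
          · intro i
            have hdp' : dp i ∈ awT R om (m + 1) := by
              rw [hdpd]; dsimp only; split
              · exact hombm
              · exact hd' _
            exact Subalgebra.sub_mem _ (Subalgebra.mul_mem _
              (by rw [homb0]; exact homT (Nat.zero_le _)) (hd' i)) hdp'
          · have hsum1 : ∑ i ∈ Finset.range (m + 2), d i * (e * x ^ i) = e * xb ^ m := by
              rw [Finset.sum_range_succ]
              have hz : d (m + 1) = 0 := by rw [hdd]; exact if_neg (lt_irrefl _)
              rw [hz, zero_mul, add_zero, heq]
              refine Finset.sum_congr rfl fun i hi => ?_
              rw [hdd]; exact congrArg (· * (e * x ^ i)) (if_pos (Finset.mem_range.mp hi))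
            have hsum2 : ∑ i ∈ Finset.range (m + 2), dp i * (e * x ^ i)
                = omb m * e + e * xb ^ m * x := by
              rw [Finset.sum_range_succ']
              have hc : ∀ i ∈ Finset.range (m + 1),
                  dp (i + 1) * (e * x ^ (i + 1)) = (c' i * (e * x ^ i)) * x := by
                intro i hi
                have hthis : dp (i + 1) = c' i := by
                  rw [hdpd, hdd]; dsimp only
                  rw [if_neg (Nat.succ_ne_zero i), Nat.add_sub_cancel,
                    if_pos (Finset.mem_range.mp hi)]
                rw [hthis, pow_succ, ← mul_assoc, ← mul_assoc, mul_assoc (c' i)]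
              rw [Finset.sum_congr rfl hc, ← Finset.sum_mul, ← heq]
              have hdp0 : dp 0 = omb m := by rw [hdpd]; rfl
              rw [hdp0, pow_zero, mul_one]
              exact add_comm _ _
            calc e * xb ^ (m + 1)
                = -(e * xb ^ m * x) + omb 0 * (e * xb ^ m) - omb m * e := lemB m
              _ = ∑ i ∈ Finset.range (m + 2), (omb 0 * d i - dp i) * (e * x ^ i) := by
                  simp only [sub_mul, Finset.sum_sub_distrib, mul_assoc, ← Finset.mul_sum,
                    hsum1, hsum2]
                  abel
      refine ⟨part1, ?_⟩
      obtain ⟨c, hc, heqc⟩ := part1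
      have hsum : (∑ i ∈ Finset.range (k + 1), c i * om i) * e = omb k * e := by
        rw [← h25 k, heqc, Finset.sum_mul, Finset.sum_mul]
        refine Finset.sum_congr rfl fun i _ => ?_
        rw [mul_assoc, mul_assoc, ← h12 i]
      have hz : (omb k - ∑ i ∈ Finset.range (k + 1), c i * om i) * e = 0 := by
        rw [sub_mul, hsum, sub_self]
      have hmem : omb k - ∑ i ∈ Finset.range (k + 1), c i * om i
          ∈ Algebra.adjoin R (Set.range om ∪ Set.range omb) :=
        Subalgebra.sub_mem _ hbig (Subalgebra.sum_mem _ fun i _ =>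
          Subalgebra.mul_mem _ (hTbig (hc i)) hbigom)
      have heqk : omb k = ∑ i ∈ Finset.range (k + 1), c i * om i :=
        sub_eq_zero.mp (htf _ hmem hz)
      rw [heqk]
      exact Subalgebra.sum_mem _ fun i hi =>
        Subalgebra.mul_mem _ (hc i) (homT (Nat.lt_succ_iff.mp (Finset.mem_range.mp hi)))
  exact ⟨homb0, homb1, fun k _ => (key k).2⟩
end
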